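/- arXiv:1712.00233 — 3 statements merged into one kernel-verified Lean document; each statement's English description precedes it below -/
import Mathlib

section
/- For any f : ∏_{n=1}^N Fin I_n → ℝ, the total variance decomposes as a sum of the variance contributions of the ANOVA terms: V[f] := E[f²] − (E[f])² = Σ_{α ≠ ∅} D_α, where D_α := E[f_α²] = Σ_x w(x) f_α(x_α)². -/
open Finset

/-- Partial expectation `E_{-α}[f]` with respect to the product weights `w`:
sum over all points agreeing with `x` on `α`, weighted by the complement weights. -/
noncomputable def partialE {N : ℕ} {I : Fin N → ℕ} (w : ∀ n : Fin N, Fin (I n) → ℝ)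
    (α : Finset (Fin N)) (f : ((n : Fin N) → Fin (I n)) → ℝ)
    (x : (n : Fin N) → Fin (I n)) : ℝ :=
  ∑ y ∈ Finset.univ.filter (fun y : (n : Fin N) → Fin (I n) => ∀ m ∈ α, y m = x m),
    (∏ m ∈ αᶜ, w m (y m)) * f y

/-- The ANOVA (Sobol) terms, defined by the recursion
`f_α(x) = E_{-α}[f](x_α) - Σ_{β ⊊ α} f_β(x_β)` (so `f_∅ = E[f]`). -/
noncomputable def anova {N : ℕ} {I : Fin N → ℕ} (w : ∀ n : Fin N, Fin (I n) → ℝ)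
    (f : ((n : Fin N) → Fin (I n)) → ℝ) (α : Finset (Fin N))
    (x : (n : Fin N) → Fin (I n)) : ℝ :=
  partialE w α f x - ∑ β ∈ (α.powerset.erase α).attach, anova w f β.1 x
termination_by α.card
decreasing_by
  have h := Finset.mem_erase.mp β.2
  exact Finset.card_lt_card (lt_of_le_of_ne (Finset.mem_powerset.mp h.2) h.1)

variable {N : ℕ} {I : Fin N → ℕ} (w : ∀ n : Fin N, Fin (I n) → ℝ)
    (f : ((n : Fin N) → Fin (I n)) → ℝ)

lemma partialE_congr (α : Finset (Fin N)) (g : ((n : Fin N) → Fin (I n)) → ℝ)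
    (x y : (n : Fin N) → Fin (I n)) (h : ∀ m ∈ α, x m = y m) :
    partialE w α g x = partialE w α g y := by
  unfold partialE
  congr 1
  apply Finset.filter_congr
  intro z _
  exact ⟨fun hz m hm => (hz m hm).trans (h m hm), fun hz m hm => (hz m hm).trans (h m hm).symm⟩

lemma anova_congr : ∀ (α : Finset (Fin N)) (x y : (n : Fin N) → Fin (I n)),
    (∀ m ∈ α, x m = y m) → anova w f α x = anova w f α y := by
  intro α
  induction α using Finset.strongInduction with
  | _ α ih =>
    intro x y h
    rw [anova, anova]
    congr 1
    · exact partialE_congr w α f x y h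
    · apply Finset.sum_congr rfl
      intro β _
      have hβ := Finset.mem_erase.mp β.2
      have hss : β.1 ⊂ α :=
        lt_of_le_of_ne (Finset.mem_powerset.mp hβ.2) hβ.1
      exact ih β.1 hss x y (fun m hm => h m (hss.subset hm))

lemma partialE_update (g : ((n : Fin N) → Fin (I n)) → ℝ) (α : Finset (Fin N))
    (n : Fin N) (hn : n ∈ α) (x : (n : Fin N) → Fin (I n)) :
    ∑ i, w n i * partialE w α g (Function.update x n i)
      = partialE w (α.erase n) g x := by
  unfold partialE
  rw [← Finset.sum_fiberwise (Finset.univ.filter fun y : (n : Fin N) → Fin (I n) =>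
      ∀ m ∈ α.erase n, y m = x m) (fun y => y n)
      (fun y => (∏ m ∈ (α.erase n)ᶜ, w m (y m)) * g y)]
  apply Finset.sum_congr rfl
  intro i _
  rw [Finset.mul_sum, Finset.filter_filter]
  apply Finset.sum_congr
  · apply Finset.filter_congr
    intro y _
    constructor
    · intro h
      refine ⟨fun m hm => ?_, ?_⟩
      · have hmn := Finset.mem_erase.mp hm
        have := h m hmn.2
        rwa [Function.update_of_ne hmn.1] at this
      · have := h n hn; rwa [Function.update_self] at this
    · rintro ⟨h1, h2⟩ m hm
      by_cases hmn : m = n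
      · subst hmn; rw [Function.update_self]; exact h2
      · rw [Function.update_of_ne hmn]; exact h1 m (Finset.mem_erase.mpr ⟨hmn, hm⟩)
  · intro y hy
    have hyn : y n = i := (Finset.mem_filter.mp hy).2.2
    rw [Finset.compl_erase, Finset.prod_insert (by simp [hn] : n ∉ αᶜ), hyn]
    ring

lemma anova_avg (hw1 : ∀ n, ∑ i, w n i = 1) :
    ∀ (α : Finset (Fin N)) (n : Fin N), n ∈ α → ∀ x : (n : Fin N) → Fin (I n),
      ∑ i, w n i * anova w f α (Function.update x n i) = 0 := by
  intro α
  induction α using Finset.strongInduction with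
  | _ α ih =>
    intro n hn x
    have step1 : ∑ i, w n i * anova w f α (Function.update x n i)
        = (∑ i, w n i * partialE w α f (Function.update x n i))
          - ∑ β ∈ (α.powerset.erase α).attach,
              ∑ i, w n i * anova w f β.1 (Function.update x n i) := by
      have key : ∀ i, w n i * anova w f α (Function.update x n i)
          = w n i * partialE w α f (Function.update x n i)
            - ∑ β ∈ (α.powerset.erase α).attach,
                w n i * anova w f β.1 (Function.update x n i) := by
        intro i; rw [anova, mul_sub, Finset.mul_sum]
      rw [Finset.sum_congr rfl (fun i _ => key i), Finset.sum_sub_distrib, Finset.sum_comm]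
    rw [step1, partialE_update w f α n hn x]
    have step2 : ∀ β ∈ (α.powerset.erase α).attach,
        ∑ i, w n i * anova w f β.1 (Function.update x n i)
          = if n ∈ β.1 then 0 else anova w f β.1 x := by
      intro β _
      have hβ := Finset.mem_erase.mp β.2
      have hss : β.1 ⊂ α := lt_of_le_of_ne (Finset.mem_powerset.mp hβ.2) hβ.1
      by_cases hnb : n ∈ β.1
      · rw [if_pos hnb, ih β.1 hss n hnb x]
      · rw [if_neg hnb]
        have hcongr : ∀ i, anova w f β.1 (Function.update x n i) = anova w f β.1 x := by
          intro i
          apply anova_congr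
          intro m hm
          exact Function.update_of_ne (fun h : m = n => hnb (h ▸ hm)) _ _
        simp_rw [hcongr, ← Finset.sum_mul, hw1 n, one_mul]
    rw [Finset.sum_congr rfl step2, Finset.sum_attach _ (fun γ => if n ∈ γ then 0 else anova w f γ x),
      Finset.sum_ite, Finset.sum_const_zero, zero_add]
    have hset : (α.powerset.erase α).filter (fun β => ¬ n ∈ β) = (α.erase n).powerset := by
      ext β
      simp only [Finset.mem_filter, Finset.mem_erase, Finset.mem_powerset, Finset.subset_erase]
      constructor
      · rintro ⟨⟨hne, hsub⟩, hnb⟩; exact ⟨hsub, hnb⟩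
      · rintro ⟨hsub, hnb⟩
        exact ⟨⟨fun h => hnb (h ▸ hn), hsub⟩, hnb⟩
    rw [hset]
    have hmem : α.erase n ∈ (α.erase n).powerset := Finset.mem_powerset_self _
    rw [← Finset.add_sum_erase _ _ hmem, anova,
      Finset.sum_attach _ (fun γ => anova w f γ x)]
    ring

lemma partialE_univ (g : ((n : Fin N) → Fin (I n)) → ℝ) (x : (n : Fin N) → Fin (I n)) :
    partialE w Finset.univ g x = g x := by
  unfold partialE
  have hf : (Finset.univ.filter fun y : (n : Fin N) → Fin (I n) =>
      ∀ m ∈ (Finset.univ : Finset (Fin N)), y m = x m) = {x} := by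
    ext y
    simp [funext_iff]
  rw [hf, Finset.sum_singleton]
  simp

lemma anova_empty (x : (n : Fin N) → Fin (I n)) :
    anova w f ∅ x = ∑ y : (n : Fin N) → Fin (I n), (∏ m, w m (y m)) * f y := by
  rw [anova]
  rw [show ((∅ : Finset (Fin N)).powerset.erase ∅) = ∅ by simp, Finset.attach_empty,
    Finset.sum_empty, sub_zero]
  simp [partialE]

lemma sum_anova (x : (n : Fin N) → Fin (I n)) :
    ∑ α : Finset (Fin N), anova w f α x = f x := by
  have h1 : anova w f Finset.univ x
      = partialE w Finset.univ f x
        - ∑ β ∈ ((Finset.univ : Finset (Fin N)).powerset.erase Finset.univ),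
            anova w f β x := by
    rw [anova, Finset.sum_attach _ (fun γ => anova w f γ x)]
  rw [← Finset.add_sum_erase Finset.univ (fun α => anova w f α x)
    (Finset.mem_univ (Finset.univ : Finset (Fin N))), h1, Finset.powerset_univ,
    partialE_univ]
  ring

lemma weights_sum_one (hw1 : ∀ n, ∑ i, w n i = 1) :
    ∑ x : (n : Fin N) → Fin (I n), ∏ n, w n (x n) = 1 := by
  rw [← Fintype.prod_sum]
  simp [hw1]

lemma ortho_core (hw1 : ∀ n, ∑ i, w n i = 1) (hI : ∀ n, 1 ≤ I n)
    (α β : Finset (Fin N)) (n : Fin N) (hnα : n ∈ α) (hnβ : n ∉ β) :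
    ∑ x : (n : Fin N) → Fin (I n),
      (∏ m, w m (x m)) * (anova w f α x * anova w f β x) = 0 := by
  set e := (Equiv.piSplitAt n (fun m => Fin (I m))).symm with he_def
  rw [← Equiv.sum_comp e
    (fun x => (∏ m, w m (x m)) * (anova w f α x * anova w f β x)),
    Fintype.sum_prod_type, Finset.sum_comm]
  apply Finset.sum_eq_zero
  intro z _
  set i0 : Fin (I n) := ⟨0, hI n⟩ with hi0
  set x₀ := e (i0, z) with hx0
  have hupd : ∀ i, e (i, z) = Function.update x₀ n i := by
    intro i
    funext m
    by_cases hm : m = n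
    · subst hm
      simp [he_def, hx0, Equiv.piSplitAt]
    · simp [he_def, hx0, Equiv.piSplitAt, hm, Function.update_of_ne hm]
  have hw : ∀ i, ∏ m, w m (Function.update x₀ n i m)
      = w n i * ∏ m ∈ Finset.univ.erase n, w m (x₀ m) := by
    intro i
    rw [← Finset.mul_prod_erase Finset.univ _ (Finset.mem_univ n)]
    congr 1
    · rw [Function.update_self]
    · apply Finset.prod_congr rfl
      intro m hm
      rw [Function.update_of_ne (Finset.mem_erase.mp hm).1]
  have hβ : ∀ i, anova w f β (Function.update x₀ n i) = anova w f β x₀ := by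
    intro i
    apply anova_congr
    intro m hm
    exact Function.update_of_ne (fun h : m = n => hnβ (h ▸ hm)) _ _
  calc ∑ i, (∏ m, w m (e (i, z) m)) * (anova w f α (e (i, z)) * anova w f β (e (i, z)))
      = ((∏ m ∈ Finset.univ.erase n, w m (x₀ m)) * anova w f β x₀)
          * ∑ i, w n i * anova w f α (Function.update x₀ n i) := by
        rw [Finset.mul_sum]
        apply Finset.sum_congr rfl
        intro i _
        rw [hupd i, hw i, hβ i]
        ring
    _ = 0 := by rw [anova_avg w f hw1 α n hnα x₀, mul_zero]

lemma ortho (hw1 : ∀ n, ∑ i, w n i = 1) (hI : ∀ n, 1 ≤ I n)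
    (α β : Finset (Fin N)) (hne : α ≠ β) :
    ∑ x : (n : Fin N) → Fin (I n),
      (∏ m, w m (x m)) * (anova w f α x * anova w f β x) = 0 := by
  by_cases h : ∃ n ∈ α, n ∉ β
  · obtain ⟨n, h1, h2⟩ := h
    exact ortho_core w f hw1 hI α β n h1 h2
  · push_neg at h
    have h2 : ∃ n ∈ β, n ∉ α := by
      by_contra h2
      push_neg at h2
      exact hne (Finset.Subset.antisymm h h2)
    obtain ⟨n, h1, h2⟩ := h2
    have := ortho_core w f hw1 hI β α n h1 h2
    rw [← this]
    apply Finset.sum_congr rfl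
    intro x _
    ring


/-- the total variance decomposes as the sum of the variance
contributions of the nonempty ANOVA terms: `V[f] = Σ_{α ≠ ∅} D_α` with
`D_α := E[f_α²]`. -/
theorem anova_variance_decomposition
    {N : ℕ} (hN : 1 ≤ N) {I : Fin N → ℕ} (hI : ∀ n, 1 ≤ I n)
    (w : ∀ n : Fin N, Fin (I n) → ℝ)
    (hw0 : ∀ n i, 0 ≤ w n i) (hw1 : ∀ n, ∑ i, w n i = 1)
    (f : ((n : Fin N) → Fin (I n)) → ℝ) :
    (∑ x : (n : Fin N) → Fin (I n), (∏ n, w n (x n)) * f x ^ 2)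
      - (∑ x : (n : Fin N) → Fin (I n), (∏ n, w n (x n)) * f x) ^ 2
    = ∑ α ∈ (Finset.univ : Finset (Finset (Fin N))).erase ∅,
        ∑ x : (n : Fin N) → Fin (I n), (∏ n, w n (x n)) * anova w f α x ^ 2 := by
  set E : ℝ := ∑ x : (n : Fin N) → Fin (I n), (∏ n, w n (x n)) * f x with hE
  have h1 : ∀ x : (n : Fin N) → Fin (I n),
      (∏ n, w n (x n)) * f x ^ 2
        = ∑ α : Finset (Fin N), ∑ β : Finset (Fin N),
            (∏ n, w n (x n)) * (anova w f α x * anova w f β x) := by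
    intro x
    rw [sq, ← sum_anova w f x, Finset.sum_mul_sum, Finset.mul_sum]
    apply Finset.sum_congr rfl
    intro α _
    rw [Finset.mul_sum]
  have h2 : (∑ x : (n : Fin N) → Fin (I n), (∏ n, w n (x n)) * f x ^ 2)
      = ∑ α : Finset (Fin N),
          ∑ x : (n : Fin N) → Fin (I n), (∏ n, w n (x n)) * anova w f α x ^ 2 := by
    calc ∑ x : (n : Fin N) → Fin (I n), (∏ n, w n (x n)) * f x ^ 2
        = ∑ x : (n : Fin N) → Fin (I n), ∑ α : Finset (Fin N), ∑ β : Finset (Fin N),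
            (∏ n, w n (x n)) * (anova w f α x * anova w f β x) :=
          Finset.sum_congr rfl (fun x _ => h1 x)
      _ = ∑ α : Finset (Fin N), ∑ x : (n : Fin N) → Fin (I n), ∑ β : Finset (Fin N),
            (∏ n, w n (x n)) * (anova w f α x * anova w f β x) := Finset.sum_comm
      _ = ∑ α : Finset (Fin N), ∑ β : Finset (Fin N), ∑ x : (n : Fin N) → Fin (I n),
            (∏ n, w n (x n)) * (anova w f α x * anova w f β x) :=
          Finset.sum_congr rfl (fun α _ => Finset.sum_comm)
      _ = ∑ α : Finset (Fin N),
            ∑ x : (n : Fin N) → Fin (I n), (∏ n, w n (x n)) * anova w f α x ^ 2 := by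
          apply Finset.sum_congr rfl
          intro α _
          rw [Finset.sum_eq_single α]
          · apply Finset.sum_congr rfl
            intro x _
            rw [sq]
          · intro β _ hβ
            exact ortho w f hw1 hI α β (fun h => hβ h.symm)
          · intro h
            exact absurd (Finset.mem_univ α) h
  have h3 : (∑ x : (n : Fin N) → Fin (I n), (∏ n, w n (x n)) * anova w f ∅ x ^ 2)
      = E ^ 2 := by
    have : ∀ x : (n : Fin N) → Fin (I n), anova w f ∅ x = E := fun x => anova_empty w f x
    simp_rw [this, ← Finset.sum_mul, weights_sum_one w hw1, one_mul]
  rw [h2, ← Finset.add_sum_erase Finset.univ _ (Finset.mem_univ (∅ : Finset (Fin N))), h3]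
  ring
end

section
/- Let A : ({0,1})^N → ℝ be a tensor given in tensor train format by cores A^(n) : Fin 2 → Matrix (Fin R_{n-1}) (Fin R_n) ℝ (R_0 = R_N = 1). Define new cores B^(n) by B^(n)[0] := A^(n)[0] − A^(n)[1] and B^(n)[1] := A^(n)[1]. Then the tensor B represented by the cores B^(n) satisfies, for every α ⊆ {1,...,N}, B_α = Σ_{β ⊇ α} (−1)^{|β|−|α|} A_β; in particular, this transformation inverts the superset aggregation (Möbius inversion over the subset lattice realized by slice-wise core operations). -/
open Finset

/-- Ordered matrix product `A 0 * A 1 * ... * A (N-1)` of a chain of matrices with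
compatible sizes `R 0 × R 1`, `R 1 × R 2`, ..., `R (N-1) × R N`. -/
def matChain {N : ℕ} (R : Fin (N+1) → ℕ)
    (A : ∀ n : Fin N, Matrix (Fin (R n.castSucc)) (Fin (R n.succ)) ℝ) :
    Matrix (Fin (R 0)) (Fin (R (Fin.last N))) ℝ :=
  Fin.induction (motive := fun i => Matrix (Fin (R 0)) (Fin (R i)) ℝ)
    1 (fun n M => M * A n) (Fin.last N)

lemma matChain_zero (R : Fin 1 → ℕ)
    (A : ∀ n : Fin 0, Matrix (Fin (R n.castSucc)) (Fin (R n.succ)) ℝ) :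
    matChain R A = (1 : Matrix (Fin (R 0)) (Fin (R 0)) ℝ) := rfl

lemma matChain_snoc {N : ℕ} (R : Fin (N+2) → ℕ)
    (A : ∀ n : Fin (N+1), Matrix (Fin (R n.castSucc)) (Fin (R n.succ)) ℝ) :
    matChain R A
      = matChain (fun i : Fin (N+1) => R i.castSucc) (fun n : Fin N => A n.castSucc)
          * A (Fin.last N) := by
  have key : ∀ i : Fin (N+1),
      Fin.induction (motive := fun i : Fin (N+2) => Matrix (Fin (R 0)) (Fin (R i)) ℝ)
        1 (fun n M => M * A n) i.castSucc
      = Fin.induction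
          (motive := fun i : Fin (N+1) =>
            Matrix (Fin ((fun j : Fin (N+1) => R j.castSucc) 0))
              (Fin ((fun j : Fin (N+1) => R j.castSucc) i)) ℝ)
        1 (fun (n : Fin N) M => M * A n.castSucc) i := by
    intro i
    induction i using Fin.induction with
    | zero => rfl
    | succ n ih => exact congrArg (fun M : Matrix (Fin (R 0)) (Fin (R n.castSucc.castSucc)) ℝ => M * A n.castSucc) ih
  exact congrArg (fun M : Matrix (Fin (R 0)) (Fin (R (Fin.last N).castSucc)) ℝ => M * A (Fin.last N)) (key (Fin.last N))

lemma matChain_sum {N : ℕ} (R : Fin (N+1) → ℕ) (S : ∀ _ : Fin N, Finset (Fin 2))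
    (c : ∀ _ : Fin N, Fin 2 → ℝ)
    (A : ∀ n : Fin N, Fin 2 → Matrix (Fin (R n.castSucc)) (Fin (R n.succ)) ℝ) :
    matChain R (fun n => ∑ k ∈ S n, c n k • A n k)
      = ∑ g ∈ Fintype.piFinset S,
          (∏ n, c n (g n)) • matChain R (fun n => A n (g n)) := by
  induction N with
  | zero =>
      have h : Fintype.piFinset S = Finset.univ := by
        apply Finset.eq_univ_iff_forall.2
        intro g; simp [Fintype.mem_piFinset]
        exact Subsingleton.elim _ _
      rw [h, Fintype.sum_unique]
      simp [matChain_zero]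
  | succ N ih =>
      rw [matChain_snoc (A := fun n => ∑ k ∈ S n, c n k • A n k)]
      rw [ih (fun i => R i.castSucc) (fun n => S n.castSucc) (fun n => c n.castSucc)
            (fun n => A n.castSucc), Matrix.sum_mul]
      have hdec : Fintype.piFinset S
          = (S (Fin.last N) ×ˢ Fintype.piFinset (fun n : Fin N => S n.castSucc)).map
              (Fin.snocEquiv (fun _ => Fin 2)).toEmbedding := by
        have h := Finset.filter_piFinset_eq_map_snocEquiv S (fun _ => True)
        simp at h
        exact h
      rw [hdec, Finset.sum_map, Finset.sum_product, ← Finset.sum_comm]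
      refine Finset.sum_congr rfl (fun g₀ hg₀ => ?_)
      rw [Matrix.mul_sum]
      refine Finset.sum_congr rfl (fun k hk => ?_)
      have h1 : ((Fin.snocEquiv (fun _ => Fin 2)) (k, g₀) : Fin (N+1) → Fin 2)
            = (Fin.snoc (α := fun _ => Fin 2) g₀ k : Fin (N+1) → Fin 2) := rfl
      simp only [Equiv.coe_toEmbedding, h1]
      rw [matChain_snoc R (fun n => A n (Fin.snoc (α := fun _ => Fin 2) g₀ k n)), Fin.prod_univ_castSucc]
      simp only [Fin.snoc_castSucc, Fin.snoc_last]
      rw [Matrix.smul_mul, Matrix.mul_smul, smul_smul]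
      rfl

/-- The matrix product `T^(1)[x_1] * ... * T^(N)[x_N]` of the tensor-train cores `T`
evaluated at the multi-index `x`.  When `R 0 = R N = 1` this is a `1 × 1` matrix whose
single entry is the value of the represented tensor at `x`. -/
def ttProd {N : ℕ} {I : Fin N → ℕ} (R : Fin (N+1) → ℕ)
    (T : ∀ n : Fin N, Fin (I n) → Matrix (Fin (R n.castSucc)) (Fin (R n.succ)) ℝ)
    (x : ∀ n : Fin N, Fin (I n)) : Matrix (Fin (R 0)) (Fin (R (Fin.last N))) ℝ :=
  matChain R (fun n => T n (x n))

/-- The binary tuple (indicator vector) associated to a subset `α ⊆ {1,...,N}`: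
`j_n = 1` iff `n ∈ α`. -/
def ind {N : ℕ} (α : Finset (Fin N)) : Fin N → Fin 2 :=
  fun n => if n ∈ α then 1 else 0

/-- replacing each core slice pair `(A^(n)[0], A^(n)[1])` by
`(A^(n)[0] - A^(n)[1], A^(n)[1])` turns a TT tensor `A` on `{0,1}^N` into the Möbius
inversion of the superset aggregation: `B_α = Σ_{β ⊇ α} (-1)^{|β| - |α|} A_β`. -/
theorem tt_superset_moebius_inversion
    {N : ℕ} (hN : 1 ≤ N)
    (R : Fin (N+1) → ℕ) (hR0 : R 0 = 1) (hRN : R (Fin.last N) = 1)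
    (A : ∀ n : Fin N, Fin 2 → Matrix (Fin (R n.castSucc)) (Fin (R n.succ)) ℝ)
    (α : Finset (Fin N)) (i : Fin (R 0)) (j : Fin (R (Fin.last N))) :
    ttProd R (fun n k => if k = 0 then A n 0 - A n 1 else A n 1) (ind α) i j
      = ∑ β ∈ Finset.univ.filter (fun β : Finset (Fin N) => α ⊆ β),
          (-1 : ℝ) ^ (β.card - α.card) * ttProd R A (ind β) i j := by
  classical
  set S : Fin N → Finset (Fin 2) := fun n => if n ∈ α then {1} else Finset.univ with hS
  set c : Fin N → Fin 2 → ℝ := fun n k => if k = 0 then 1 else if n ∈ α then 1 else -1 with hc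
  have hmat : ttProd R (fun n k => if k = 0 then A n 0 - A n 1 else A n 1) (ind α)
      = ∑ g ∈ Fintype.piFinset S, (∏ n, c n (g n)) • matChain R (fun n => A n (g n)) := by
    have hcore : (fun n => (fun (k : Fin 2) => if k = 0 then A n 0 - A n 1 else A n 1) (ind α n))
        = fun n => ∑ k ∈ S n, c n k • A n k := by
      funext n
      by_cases h : n ∈ α
      · simp [ind, hS, hc, h]
      · simp [ind, hS, hc, h, Fin.sum_univ_succ, sub_eq_add_neg]
    show matChain R _ = _
    rw [hcore]
    exact matChain_sum R S c A
  rw [hmat]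
  rw [Matrix.sum_apply]
  have fin2 : ∀ k : Fin 2, k = 0 ∨ k = 1 := by decide
  refine Finset.sum_nbij' (i := fun g : Fin N → Fin 2 => Finset.univ.filter (fun n => g n = 1))
    (j := fun β : Finset (Fin N) => ind β) ?_ ?_ ?_ ?_ ?_
  · intro g hg
    simp only [Finset.mem_filter, Finset.mem_univ, true_and]
    intro n hn
    have := Fintype.mem_piFinset.1 hg n
    rw [hS] at this; simp [hn] at this
    simp [this, hn]
  · intro β hβ
    simp only [Finset.mem_filter, Finset.mem_univ, true_and] at hβ
    refine Fintype.mem_piFinset.2 fun n => ?_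
    rw [hS]
    by_cases hn : n ∈ α
    · simp [hn, ind, hβ hn]
    · simp [hn]
  · intro g hg
    funext n
    rcases fin2 (g n) with h | h <;> simp [ind, h]
  · intro β hβ
    ext n
    simp only [Finset.mem_filter, Finset.mem_univ, true_and, ind]
    by_cases hn : n ∈ β <;> simp [hn]
  · intro g hg
    set β := Finset.univ.filter (fun n => g n = 1) with hβ
    have hαβ : α ⊆ β := by
      intro n hn
      have := Fintype.mem_piFinset.1 hg n
      rw [hS] at this; simp [hn] at this
      simp [hβ, this, hn]
    have hind : ind β = g := by
      funext n
      rcases fin2 (g n) with h | h <;> simp [ind, hβ, h]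
    have hcoef : (∏ n, c n (g n)) = (-1 : ℝ) ^ (β.card - α.card) := by
      have : ∀ n, c n (g n) = if n ∈ β \ α then (-1 : ℝ) else 1 := by
        intro n
        rcases fin2 (g n) with h | h
        · simp [hc, h, Finset.mem_sdiff, hβ]
        · by_cases hn : n ∈ α <;> simp [hc, h, Finset.mem_sdiff, hβ, hn]
      rw [Finset.prod_congr rfl (fun n _ => this n), Finset.prod_ite_mem,
        Finset.univ_inter, Finset.prod_const, Finset.card_sdiff_of_subset hαβ]
    rw [Matrix.smul_apply, smul_eq_mul, hcoef, hind]
    rfl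
end

section
/- Let A : ({0,1})^N → ℝ be a tensor given in tensor train format by cores A^(n) : Fin 2 → Matrix (Fin R_{n-1}) (Fin R_n) ℝ (R_0 = R_N = 1). Define new cores C^(n) by C^(n)[0] := A^(n)[0] and C^(n)[1] := A^(n)[0] + A^(n)[1]. Then the tensor C represented by the cores C^(n) satisfies, for every α ⊆ {1,...,N}, C_α = Σ_{β ⊆ α} A_β; i.e., the transformed tensor train represents exactly the closed (subset) aggregation of A. -/
open Finset

section
variable {N : ℕ} (R : Fin (N+1) → ℕ)

noncomputable def partProd
    (T : ∀ n : Fin N, Matrix (Fin (R n.castSucc)) (Fin (R n.succ)) ℝ)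
    (i : Fin (N+1)) : Matrix (Fin (R 0)) (Fin (R i)) ℝ :=
  Fin.induction (motive := fun i => Matrix (Fin (R 0)) (Fin (R i)) ℝ)
    1 (fun n M => M * T n) i

lemma partProd_succ
    (T : ∀ n : Fin N, Matrix (Fin (R n.castSucc)) (Fin (R n.succ)) ℝ) (n : Fin N) :
    partProd R T n.succ = partProd R T n.castSucc * T n := by
  simp [partProd]

lemma partProd_congr
    (T T' : ∀ n : Fin N, Matrix (Fin (R n.castSucc)) (Fin (R n.succ)) ℝ)
    (i : Fin (N+1)) (h : ∀ n : Fin N, (n : ℕ) < i → T n = T' n) :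
    partProd R T i = partProd R T' i := by
  induction i using Fin.induction with
  | zero => rfl
  | succ n ih =>
      rw [partProd_succ, partProd_succ, ih, h n (by simp)]
      intro m hm
      exact h m (by simp only [Fin.val_succ, Fin.coe_castSucc] at *; omega)

lemma key (A : ∀ n : Fin N, Fin 2 → Matrix (Fin (R n.castSucc)) (Fin (R n.succ)) ℝ)
    (α : Finset (Fin N)) (i : Fin (N+1)) :
    partProd R (fun n => if ind α n = 0 then A n 0 else A n 0 + A n 1) i
      = ∑ β ∈ (α.filter (fun m : Fin N => (m : ℕ) < (i : ℕ))).powerset,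
          partProd R (fun n => A n (ind β n)) i := by
  induction i using Fin.induction with
  | zero =>
      have : α.filter (fun m : Fin N => (m : ℕ) < ((0 : Fin (N+1)) : ℕ)) = ∅ := by
        simp
      rw [this]
      simp [partProd]
  | succ n ih =>
      rw [partProd_succ]
      by_cases hn : n ∈ α
      · have hval : ind α n = 1 := by simp [ind, hn]
        have hnot : n ∉ α.filter (fun m : Fin N => (m : ℕ) < ((n.castSucc : Fin (N+1)) : ℕ)) := by
          simp
        have hf : α.filter (fun m : Fin N => (m : ℕ) < ((n.succ : Fin (N+1)) : ℕ))
            = insert n (α.filter (fun m : Fin N => (m : ℕ) < ((n.castSucc : Fin (N+1)) : ℕ))) := by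
          ext m
          simp only [mem_filter, mem_insert, Fin.val_succ, Fin.coe_castSucc]
          constructor
          · rintro ⟨hm, hlt⟩
            rcases eq_or_ne m n with h | h
            · exact Or.inl h
            · right; exact ⟨hm, by
                have : (m : ℕ) ≠ (n : ℕ) := fun hv => h (Fin.val_injective hv)
                omega⟩
          · rintro (rfl | ⟨hm, hlt⟩)
            · exact ⟨hn, by omega⟩
            · exact ⟨hm, by omega⟩
        rw [hf, Finset.sum_powerset_insert hnot, ih, hval, if_neg (by decide : (1:Fin 2) ≠ 0)]
        simp only [Matrix.mul_add, Matrix.sum_mul]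
        congr 1
        · refine Finset.sum_congr rfl fun β hβ => ?_
          rw [partProd_succ]
          have hnβ : n ∉ β := fun h => by
            have := Finset.mem_powerset.mp hβ h
            simp at this
          have : ind β n = 0 := by simp [ind, hnβ]
          rw [this]
        · refine Finset.sum_congr rfl fun β hβ => ?_
          rw [partProd_succ]
          have hmem : n ∈ insert n β := Finset.mem_insert_self n β
          have h1 : ind (insert n β) n = 1 := by simp [ind]
          rw [h1]
          congr 1
          apply partProd_congr
          intro m hm
          have hmn : m ≠ n := by
            intro h; subst h
            simp [Fin.coe_castSucc] at hm
          simp [ind, Finset.mem_insert, hmn]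
      · have hval : ind α n = 0 := by simp [ind, hn]
        have hf : α.filter (fun m : Fin N => (m : ℕ) < ((n.succ : Fin (N+1)) : ℕ))
            = α.filter (fun m : Fin N => (m : ℕ) < ((n.castSucc : Fin (N+1)) : ℕ)) := by
          ext m
          simp only [mem_filter, Fin.val_succ, Fin.coe_castSucc]
          refine and_congr_right fun hm => ?_
          have : (m : ℕ) ≠ (n : ℕ) := fun hv => hn (Fin.val_injective hv ▸ hm)
          omega
        rw [hf, ih, hval, if_pos rfl, Matrix.sum_mul]
        refine Finset.sum_congr rfl fun β hβ => ?_
        rw [partProd_succ]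
        have hnβ : n ∉ β := fun h => by
          have := Finset.mem_powerset.mp hβ h
          simp [Fin.coe_castSucc] at this
        have : ind β n = 0 := by simp [ind, hnβ]
        rw [this]
end

/-- replacing each core slice pair `(A^(n)[0], A^(n)[1])` by
`(A^(n)[0], A^(n)[0] + A^(n)[1])` turns a TT tensor `A` on `{0,1}^N` into the tensor of
closed (subset) aggregations: `C_α = Σ_{β ⊆ α} A_β`. -/
theorem tt_closed_aggregation
    {N : ℕ} (hN : 1 ≤ N)
    (R : Fin (N+1) → ℕ) (hR0 : R 0 = 1) (hRN : R (Fin.last N) = 1)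
    (A : ∀ n : Fin N, Fin 2 → Matrix (Fin (R n.castSucc)) (Fin (R n.succ)) ℝ)
    (α : Finset (Fin N)) (i : Fin (R 0)) (j : Fin (R (Fin.last N))) :
    ttProd R (fun n k => if k = 0 then A n 0 else A n 0 + A n 1) (ind α) i j
      = ∑ β ∈ α.powerset, ttProd R A (ind β) i j := by
  have h := key R A α (Fin.last N)
  have hf : α.filter (fun m : Fin N => (m : ℕ) < ((Fin.last N : Fin (N+1)) : ℕ)) = α := by
    ext m
    simp [Fin.val_last, m.isLt]
  rw [hf] at h
  have hL : ttProd R (fun n k => if k = 0 then A n 0 else A n 0 + A n 1) (ind α)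
      = partProd R (fun n => if ind α n = 0 then A n 0 else A n 0 + A n 1) (Fin.last N) := rfl
  have hR : ∀ β : Finset (Fin N),
      ttProd R A (ind β) = partProd R (fun n => A n (ind β n)) (Fin.last N) := fun _ => rfl
  rw [hL, h]
  simp only [Matrix.sum_apply]
  exact Finset.sum_congr rfl fun β _ => by rw [hR β]
end
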